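/- Let F = ⟨f_1,…,f_r⟩ be a flip sequence transforming T_0 into T_r, and let π(F) be a permutation of the flips of F that is a topological sort of the DAG D_F. Then π(F) is a valid sequence of flips transforming T_0 into T_r. -/
import Mathlib


open Finset

/-- Two vertices of the convex `m`-gon are adjacent in the cyclic order. -/
def PolyAdj (m : ℕ) (a b : Fin m) : Prop :=
  (a.val + 1) % m = b.val ∨ (b.val + 1) % m = a.val

/-- `e` is a diagonal of the convex `m`-gon: an unordered pair of distinct,
non-adjacent vertices. -/
def IsDiagonal (m : ℕ) (e : Finset (Fin m)) : Prop :=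
  ∃ a b : Fin m, a ≠ b ∧ ¬ PolyAdj m a b ∧ e = {a, b}

/-- The cyclic distance from `a` to `x`, going forwards in the cyclic order. -/
def cycDist (m : ℕ) (a x : Fin m) : ℕ := (x.val + m - a.val) % m

/-- `x` lies strictly between `a` and `b` in the cyclic order. -/
def CycBtw (m : ℕ) (a x b : Fin m) : Prop :=
  0 < cycDist m a x ∧ cycDist m a x < cycDist m a b

/-- Two chords cross: their endpoints strictly interleave in the cyclic order. -/
def Cross (m : ℕ) (e₁ e₂ : Finset (Fin m)) : Prop :=
  ∃ a b c d : Fin m, e₁ = {a, b} ∧ e₂ = {c, d} ∧ CycBtw m a c b ∧ CycBtw m b d a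

/-- A triangulation of the convex `m`-gon: a maximal set of pairwise
non-crossing diagonals. -/
structure Triangulation (m : ℕ) where
  diagonals : Finset (Finset (Fin m))
  isDiagonal : ∀ e ∈ diagonals, IsDiagonal m e
  noncross : ∀ e₁ ∈ diagonals, ∀ e₂ ∈ diagonals, ¬ Cross m e₁ e₂
  maximal : ∀ e, IsDiagonal m e → (∀ e' ∈ diagonals, ¬ Cross m e e') → e ∈ diagonals

/-- `e` is a side in the triangulation `T`: either an edge of the polygon
(between cyclically adjacent vertices) or a diagonal of `T`. -/
def IsSide (m : ℕ) (T : Triangulation m) (e : Finset (Fin m)) : Prop :=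
  (∃ a b : Fin m, PolyAdj m a b ∧ e = {a, b}) ∨ e ∈ T.diagonals

/-- `t` is a triangle of the triangulation `T`: three distinct vertices each
pair of which forms a side of `T`. -/
def IsTriangle (m : ℕ) (T : Triangulation m) (t : Finset (Fin m)) : Prop :=
  ∃ a b c : Fin m, a ≠ b ∧ a ≠ c ∧ b ≠ c ∧ t = {a, b, c} ∧
    IsSide m T {a, b} ∧ IsSide m T {a, c} ∧ IsSide m T {b, c}

/-- Two diagonals of `T` are neighbors if they both belong to `T` and lie on a
common triangle of `T`; they are independent otherwise. -/
def Neighbor (m : ℕ) (T : Triangulation m) (e₁ e₂ : Finset (Fin m)) : Prop :=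
  e₁ ∈ T.diagonals ∧ e₂ ∈ T.diagonals ∧
    ∃ t, IsTriangle m T t ∧ e₁ ⊆ t ∧ e₂ ⊆ t

/-- `T'` is obtained from `T` by flipping the diagonal `e`, which removes `e`
and creates the new diagonal `e'` (necessarily the opposite diagonal of the
quadrilateral formed by the two triangles of `T` containing `e`, since `T'` is
again a triangulation). -/
def IsFlip (m : ℕ) (T T' : Triangulation m) (e e' : Finset (Fin m)) : Prop :=
  e ∈ T.diagonals ∧ e' ∉ T.diagonals ∧
    T'.diagonals = insert e' (T.diagonals.erase e)

/-- `Ts 0, Ts 1, …, Ts r` is a sequence of triangulations in which `Ts (i+1)`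
is obtained from `Ts i` by performing the flip `F i`, which removes the
diagonal `(F i).1` and creates the diagonal `(F i).2`. -/
def IsFlipSeq (m r : ℕ) (F : ℕ → Finset (Fin m) × Finset (Fin m))
    (Ts : ℕ → Triangulation m) : Prop :=
  ∀ i < r, IsFlip m (Ts i) (Ts (i + 1)) (F i).1 (F i).2

/-- The flip distance between two triangulations: the minimum length of a flip
sequence transforming one into the other. -/
noncomputable def FlipDist (m : ℕ) (T T' : Triangulation m) : ℕ :=
  sInf {r | ∃ F Ts, IsFlipSeq m r F Ts ∧ Ts 0 = T ∧ Ts r = T'}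

/-- `e` is a free-diagonal of `T` with respect to `Tfinal`: flipping `e` in `T`
creates a diagonal belonging to `Tfinal`. -/
def FreeDiagonal (m : ℕ) (T Tfinal : Triangulation m) (e : Finset (Fin m)) : Prop :=
  ∃ T' e', IsFlip m T T' e e' ∧ e' ∈ Tfinal.diagonals

/-- Arc of the DAG `D_F` associated to the flip sequence `F` with triangulation
sequence `Ts`: there is an arc from flip `i` to flip `j` when `i < j` and the
diagonal created by flip `i` is a neighbor of the diagonal removed by flip `j`
in the triangulation `Ts j` in which flip `j` is performed. -/
def Arc (m r : ℕ) (F : ℕ → Finset (Fin m) × Finset (Fin m))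
    (Ts : ℕ → Triangulation m) (i j : ℕ) : Prop :=
  i < j ∧ j < r ∧ Neighbor m (Ts j) (F i).2 (F j).1


section Lemmas
variable {m : ℕ}

lemma cycDist_spec (m : ℕ) (u v : Fin m) :
    (u.val ≤ v.val ∧ cycDist m u v = v.val - u.val) ∨
    (v.val < u.val ∧ cycDist m u v = v.val + m - u.val) := by
  have hu := u.isLt; have hv := v.isLt
  unfold cycDist
  rcases le_or_gt u.val v.val with h | h
  · left
    refine ⟨h, ?_⟩
    have : v.val + m - u.val = (v.val - u.val) + m := by omega
    rw [this, Nat.add_mod_right]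
    exact Nat.mod_eq_of_lt (by omega)
  · right
    exact ⟨h, Nat.mod_eq_of_lt (by omega)⟩

lemma cycBtw_iff (m : ℕ) (u v w : Fin m) :
    CycBtw m u v w ↔ ((u.val < v.val ∧ v.val < w.val) ∨
      (v.val < w.val ∧ w.val < u.val) ∨ (w.val < u.val ∧ u.val < v.val)) := by
  have hu := u.isLt; have hv := v.isLt; have hw := w.isLt
  have h1 := cycDist_spec m u v
  have h2 := cycDist_spec m u w
  unfold CycBtw
  omega

lemma polyAdj_iff (hm : 3 ≤ m) (u v : Fin m) :
    PolyAdj m u v ↔ (cycDist m u v = 1 ∨ cycDist m v u = 1) := by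
  have hu := u.isLt; have hv := v.isLt
  have h1 := cycDist_spec m u v
  have h2 := cycDist_spec m v u
  have key : ∀ x y : Fin m, ((x.val + 1) % m = y.val) ↔ cycDist m x y = 1 := by
    intro x y
    have hx := x.isLt; have hy := y.isLt
    have s := cycDist_spec m x y
    rcases Nat.lt_or_ge (x.val + 1) m with h | h
    · rw [Nat.mod_eq_of_lt h]; omega
    · rw [show x.val + 1 = m by omega, Nat.mod_self]; omega
  unfold PolyAdj
  rw [key u v, key v u]

lemma cycDist_eq_zero_iff (hm : 3 ≤ m) (u v : Fin m) :
    cycDist m u v = 0 ↔ u = v := by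
  have h1 := cycDist_spec m u v
  have hu := u.isLt; have hv := v.isLt
  rw [Fin.ext_iff]; omega

end Lemmas

section Lemmas2
variable {m : ℕ}

/-- non-crossing of chords {u,v} and {p,q}, in a fixed orientation. -/
def SideOK (m : ℕ) (u v p q : Fin m) : Prop :=
  ¬(CycBtw m u p v ∧ CycBtw m v q u) ∧ ¬(CycBtw m u q v ∧ CycBtw m v p u)

lemma pair_eq {α : Type*} [DecidableEq α] {a b c d : α} (hab : a ≠ b)
    (h : ({a, b} : Finset α) = {c, d}) : (a = c ∧ b = d) ∨ (a = d ∧ b = c) := by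
  have ha : a ∈ ({c, d} : Finset α) := h ▸ (by simp)
  have hb : b ∈ ({c, d} : Finset α) := h ▸ (by simp)
  have hc : c ∈ ({a, b} : Finset α) := h ▸ (by simp)
  have hd : d ∈ ({a, b} : Finset α) := h ▸ (by simp)
  simp only [Finset.mem_insert, Finset.mem_singleton] at ha hb hc hd
  rcases ha with h1 | h1 <;> rcases hb with h2 | h2 <;> tauto

lemma pair_comm' {α : Type*} [DecidableEq α] (a b : α) :
    ({a, b} : Finset α) = {b, a} := Finset.pair_comm a b

lemma cross_iff_not_sideOK (hm : 3 ≤ m) {u v p q : Fin m} (huv : u ≠ v) (hpq : p ≠ q) :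
    Cross m {u, v} {p, q} ↔ ¬ SideOK m u v p q := by
  constructor
  · rintro ⟨a, b, c, d, h1, h2, hb1, hb2⟩
    rcases pair_eq huv h1 with ⟨ha, hb⟩ | ⟨ha, hb⟩ <;>
      rcases pair_eq hpq h2 with ⟨hc, hd⟩ | ⟨hc, hd⟩ <;>
      subst ha <;> subst hb <;> subst hc <;> subst hd <;>
      · intro hs; unfold SideOK at hs; tauto
  · intro hs
    unfold SideOK at hs
    rcases not_and_or.mp hs with h | h
    · obtain ⟨h1, h2⟩ := not_not.mp h
      exact ⟨u, v, p, q, rfl, rfl, h1, h2⟩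
    · obtain ⟨h1, h2⟩ := not_not.mp h
      exact ⟨u, v, q, p, rfl, pair_comm' p q, h1, h2⟩

lemma sideOK_symm (hm : 3 ≤ m) {u v p q : Fin m} :
    SideOK m u v p q ↔ SideOK m p q u v := by
  unfold SideOK
  simp only [cycBtw_iff]
  have := u.isLt; have := v.isLt; have := p.isLt; have := q.isLt
  omega

lemma sideOK_of_polyAdj (hm : 3 ≤ m) {u v : Fin m} (h : PolyAdj m u v) (p q : Fin m) :
    SideOK m u v p q := by
  rw [polyAdj_iff hm] at h
  unfold SideOK CycBtw
  have h1 := cycDist_spec m u v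
  have h2 := cycDist_spec m v u
  have h3 := cycDist_spec m u p
  have h4 := cycDist_spec m u q
  have h5 := cycDist_spec m v p
  have h6 := cycDist_spec m v q
  have := u.isLt; have := v.isLt; have := p.isLt; have := q.isLt
  omega

lemma polyAdj_symm {u v : Fin m} (h : PolyAdj m u v) : PolyAdj m v u := by
  unfold PolyAdj at *; tauto

end Lemmas2

section Lemmas3a
variable {m : ℕ}

lemma cycDist_self (a : Fin m) : cycDist m a a = 0 := by
  unfold cycDist
  rw [show a.val + m - a.val = m by omega, Nat.mod_self]

lemma cycDist_lt (hm : 3 ≤ m) (a x : Fin m) : cycDist m a x < m :=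
  Nat.mod_lt _ (by omega)

lemma cycDist_inj (a x y : Fin m) : cycDist m a x = cycDist m a y ↔ x = y := by
  have s1 := cycDist_spec m a x
  have s2 := cycDist_spec m a y
  have := a.isLt; have := x.isLt; have := y.isLt
  rw [Fin.ext_iff]; omega

lemma cycBtw_iff_d (a u v w : Fin m) :
    CycBtw m u v w ↔
      ((cycDist m a u < cycDist m a v ∧ cycDist m a v < cycDist m a w) ∨
       (cycDist m a v < cycDist m a w ∧ cycDist m a w < cycDist m a u) ∨
       (cycDist m a w < cycDist m a u ∧ cycDist m a u < cycDist m a v)) := by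
  have s1 := cycDist_spec m u v
  have s2 := cycDist_spec m u w
  have s3 := cycDist_spec m a u
  have s4 := cycDist_spec m a v
  have s5 := cycDist_spec m a w
  have := a.isLt; have := u.isLt; have := v.isLt; have := w.isLt
  unfold CycBtw
  omega

end Lemmas3a

section Lemmas3b
variable {m : ℕ}

/-- linear-coordinate chord crossing: chord with coords `s < t` vs chord `{p, q}` -/
def X (s t p q : ℕ) : Prop := (s<p ∧ p<t ∧ (q<s ∨ t<q)) ∨ (s<q ∧ q<t ∧ (p<s ∨ t<p))

set_option maxHeartbeats 2000000 in
lemma NCORE1 (m db dc dc' dp dq : ℕ)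
    (ho : 0 < dc ∧ dc < db ∧ db < dc' ∧ dc' < m) (hp : dp < m) (hq : dq < m)
    (h1 : ¬ X 0 dc dp dq) (h2 : ¬ X dc db dp dq) (h3 : ¬ X db dc' dp dq)
    (h4 : ¬ X 0 dc' dp dq) (h5 : ¬ X 0 db dp dq)
    (hne1 : ¬(dp = 0 ∧ dq = db)) (hne2 : ¬(dp = db ∧ dq = 0)) :
    ¬ X dc dc' dp dq := by
  unfold X at *
  omega

set_option maxHeartbeats 2000000 in
lemma NCORE2 (m db dc dc' dp dq : ℕ)
    (ho : 0 < dc ∧ dc < db ∧ db < dc' ∧ dc' < m) (hp : dp < m) (hq : dq < m)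
    (h1 : ¬ X 0 dc dp dq) (h2 : ¬ X dc db dp dq) (h3 : ¬ X db dc' dp dq)
    (h4 : ¬ X 0 dc' dp dq) (hx : X 0 db dp dq) :
    (dp = dc ∧ dq = dc') ∨ (dp = dc' ∧ dq = dc) := by
  unfold X at *
  omega

lemma sideOK_swap (hm : 3 ≤ m) (u v p q : Fin m) :
    SideOK m u v p q ↔ SideOK m v u p q := by
  unfold SideOK
  simp only [cycBtw_iff]
  have := u.isLt; have := v.isLt; have := p.isLt; have := q.isLt
  omega

lemma sideOK_iff_X (hm : 3 ≤ m) (a u v p q : Fin m)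
    (h : cycDist m a u < cycDist m a v) :
    SideOK m u v p q ↔
      ¬ X (cycDist m a u) (cycDist m a v) (cycDist m a p) (cycDist m a q) := by
  unfold SideOK X
  simp only [cycBtw_iff_d a]
  have := cycDist_lt hm a u; have := cycDist_lt hm a v
  have := cycDist_lt hm a p; have := cycDist_lt hm a q
  omega

/-- extract the coordinates of a quadrilateral configuration -/
lemma quadCoords (hm : 3 ≤ m) {a b c c' : Fin m}
    (hc : CycBtw m a c b) (hc' : CycBtw m b c' a) :
    0 < cycDist m a c ∧ cycDist m a c < cycDist m a b ∧
      cycDist m a b < cycDist m a c' ∧ cycDist m a c' < m := by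
  have e0 := cycDist_self (m := m) a
  have l1 := cycDist_lt hm a b; have l2 := cycDist_lt hm a c
  have l3 := cycDist_lt hm a c'
  have h1 := (cycBtw_iff_d a a c b).mp hc
  have h2 := (cycBtw_iff_d a b c' a).mp hc'
  omega

lemma CORE1 (hm : 3 ≤ m) {a b c c' p q : Fin m}
    (hc : CycBtw m a c b) (hc' : CycBtw m b c' a)
    (h1 : SideOK m a c p q) (h2 : SideOK m c b p q)
    (h3 : SideOK m b c' p q) (h4 : SideOK m c' a p q)
    (h5 : SideOK m a b p q)
    (hne : ¬(p = a ∧ q = b) ∧ ¬(p = b ∧ q = a)) :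
    SideOK m c c' p q := by
  have e0 := cycDist_self (m := m) a
  obtain ⟨o1, o2, o3, o4⟩ := quadCoords hm hc hc'
  have b1 := (sideOK_iff_X hm a a c p q (by omega)).mp h1
  have b2 := (sideOK_iff_X hm a c b p q (by omega)).mp h2
  have b3 := (sideOK_iff_X hm a b c' p q (by omega)).mp h3
  have b4 := (sideOK_iff_X hm a a c' p q (by omega)).mp ((sideOK_swap hm c' a p q).mp h4)
  have b5 := (sideOK_iff_X hm a a b p q (by omega)).mp h5
  rw [e0] at b1 b4 b5
  have hne1 : ¬(cycDist m a p = 0 ∧ cycDist m a q = cycDist m a b) := by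
    rintro ⟨x1, x2⟩
    exact hne.1 ⟨((cycDist_eq_zero_iff hm a p).mp (e0 ▸ x1)).symm, (cycDist_inj a q b).mp x2⟩
  have hne2 : ¬(cycDist m a p = cycDist m a b ∧ cycDist m a q = 0) := by
    rintro ⟨x1, x2⟩
    exact hne.2 ⟨(cycDist_inj a p b).mp x1, ((cycDist_eq_zero_iff hm a q).mp (e0 ▸ x2)).symm⟩
  exact (sideOK_iff_X hm a c c' p q (by omega)).mpr
    (NCORE1 m _ _ _ _ _ ⟨o1, o2, o3, o4⟩ (cycDist_lt hm a p) (cycDist_lt hm a q)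
      b1 b2 b3 b4 b5 hne1 hne2)

lemma CORE2 (hm : 3 ≤ m) {a b c c' p q : Fin m}
    (hc : CycBtw m a c b) (hc' : CycBtw m b c' a)
    (h1 : SideOK m a c p q) (h2 : SideOK m c b p q)
    (h3 : SideOK m b c' p q) (h4 : SideOK m c' a p q)
    (hcross : ¬ SideOK m a b p q) :
    (p = c ∧ q = c') ∨ (p = c' ∧ q = c) := by
  have e0 := cycDist_self (m := m) a
  obtain ⟨o1, o2, o3, o4⟩ := quadCoords hm hc hc'
  have b1 := (sideOK_iff_X hm a a c p q (by omega)).mp h1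
  have b2 := (sideOK_iff_X hm a c b p q (by omega)).mp h2
  have b3 := (sideOK_iff_X hm a b c' p q (by omega)).mp h3
  have b4 := (sideOK_iff_X hm a a c' p q (by omega)).mp ((sideOK_swap hm c' a p q).mp h4)
  have b5 : X 0 (cycDist m a b) (cycDist m a p) (cycDist m a q) := by
    have := (sideOK_iff_X hm a a b p q (by omega)).not.mp hcross
    rw [e0] at this
    exact not_not.mp this
  rw [e0] at b1 b4
  have := NCORE2 m _ _ _ _ _ ⟨o1, o2, o3, o4⟩ (cycDist_lt hm a p) (cycDist_lt hm a q)
    b1 b2 b3 b4 b5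
  rcases this with ⟨x1, x2⟩ | ⟨x1, x2⟩
  · exact Or.inl ⟨(cycDist_inj a p c).mp x1, (cycDist_inj a q c').mp x2⟩
  · exact Or.inr ⟨(cycDist_inj a p c').mp x1, (cycDist_inj a q c).mp x2⟩

lemma CORE3 (hm : 3 ≤ m) {a b c c' w : Fin m}
    (hc : CycBtw m a c b) (hc' : CycBtw m b c' a)
    (h1 : SideOK m a b c w) (h2 : SideOK m a b c' w)
    (hwc : w ≠ c) (hwc' : w ≠ c') :
    w = a ∨ w = b := by
  have e0 := cycDist_self (m := m) a
  obtain ⟨o1, o2, o3, o4⟩ := quadCoords hm hc hc'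
  have b1 := (sideOK_iff_X hm a a b c w (by omega)).mp h1
  have b2 := (sideOK_iff_X hm a a b c' w (by omega)).mp h2
  rw [e0] at b1 b2
  have lw := cycDist_lt hm a w
  have hwc2 : cycDist m a w ≠ cycDist m a c := fun h => hwc ((cycDist_inj a w c).mp h)
  have hwc2' : cycDist m a w ≠ cycDist m a c' := fun h => hwc' ((cycDist_inj a w c').mp h)
  have : cycDist m a w = 0 ∨ cycDist m a w = cycDist m a b := by
    unfold X at b1 b2
    omega
  rcases this with h | h
  · exact Or.inl ((cycDist_eq_zero_iff hm a w).mp (e0 ▸ h)).symm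
  · exact Or.inr ((cycDist_inj a w b).mp h)

lemma CORE4 (hm : 3 ≤ m) {a b c c' : Fin m}
    (hc : CycBtw m a c b) (hc' : CycBtw m b c' a) :
    c ≠ c' ∧ ¬ PolyAdj m c c' ∧ CycBtw m c b c' ∧ CycBtw m c' a c := by
  rw [polyAdj_iff hm]
  have e0 := cycDist_self (m := m) a
  obtain ⟨o1, o2, o3, o4⟩ := quadCoords hm hc hc'
  have s1 := cycDist_spec m c c'
  have s2 := cycDist_spec m c' c
  have s3 := cycDist_spec m a c
  have s4 := cycDist_spec m a c'
  have s5 := cycDist_spec m a b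
  simp only [cycBtw_iff, Fin.ext_iff] at *
  have := a.isLt; have := b.isLt; have := c.isLt; have := c'.isLt
  omega

/-- a chord has no self-crossing -/
lemma not_cross_self (hm : 3 ≤ m) {u v : Fin m} (huv : u ≠ v) :
    ¬ Cross m {u, v} {u, v} := by
  rw [cross_iff_not_sideOK hm huv huv]
  simp only [SideOK, cycBtw_iff, Fin.ext_iff, not_not]
  have := u.isLt; have := v.isLt
  omega

/-- a diagonal's endpoints are 2 apart on both sides -/
lemma diag_dists (hm : 3 ≤ m) {u v : Fin m} (huv : u ≠ v) (h : ¬ PolyAdj m u v) :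
    2 ≤ cycDist m u v ∧ cycDist m u v ≤ m - 2 := by
  rw [polyAdj_iff hm] at h
  have s1 := cycDist_spec m u v
  have s2 := cycDist_spec m v u
  simp only [ne_eq, Fin.ext_iff] at huv
  have := u.isLt; have := v.isLt
  omega

end Lemmas3b

section Lemmas4
variable {m : ℕ}

lemma pair_subset_triple {α : Type*} [DecidableEq α] {x y a b c : α} (hxy : x ≠ y)
    (h : ({x, y} : Finset α) ⊆ {a, b, c}) :
    ({x, y} : Finset α) = {a, b} ∨ ({x, y} : Finset α) = {a, c} ∨
      ({x, y} : Finset α) = {b, c} := by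
  have hx : x ∈ ({a, b, c} : Finset α) := h (by simp)
  have hy : y ∈ ({a, b, c} : Finset α) := h (by simp)
  simp only [Finset.mem_insert, Finset.mem_singleton] at hx hy
  rcases hx with rfl | rfl | rfl <;> rcases hy with rfl | rfl | rfl <;>
    first
    | exact absurd rfl hxy
    | exact Or.inl rfl
    | exact Or.inr (Or.inl rfl)
    | exact Or.inr (Or.inr rfl)
    | exact Or.inl (Finset.pair_comm _ _)
    | exact Or.inr (Or.inl (Finset.pair_comm _ _))
    | exact Or.inr (Or.inr (Finset.pair_comm _ _))

lemma third_elt {α : Type*} [DecidableEq α] {t : Finset α} {x y z c c' : α}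
    (ht : t = {x, y, z}) (hxy : x ≠ y) (hxz : x ≠ z) (hyz : y ≠ z)
    (hc : c ∈ t) (hc' : c' ∈ t) (hcc' : c ≠ c') :
    ∃ w, t = {c, c', w} ∧ w ≠ c ∧ w ≠ c' := by
  have hcard : t.card = 3 := by
    rw [ht, Finset.card_insert_of_notMem (by simp [hxy, hxz]),
      Finset.card_insert_of_notMem (by simp [hyz]), Finset.card_singleton]
  have hsub : ({c, c'} : Finset α) ⊆ t := by
    intro s hs
    simp only [Finset.mem_insert, Finset.mem_singleton] at hs
    rcases hs with rfl | rfl <;> assumption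
  have hne : (t \ {c, c'}).Nonempty := by
    apply Finset.card_pos.mp
    rw [Finset.card_sdiff_of_subset hsub, Finset.card_insert_of_notMem (by simp [hcc']),
      Finset.card_singleton, hcard]
    omega
  obtain ⟨w, hw⟩ := hne
  rw [Finset.mem_sdiff, Finset.mem_insert, Finset.mem_singleton] at hw
  obtain ⟨hwt, hw2⟩ := hw
  push_neg at hw2
  refine ⟨w, ?_, hw2.1, hw2.2⟩
  have hsub2 : ({c, c', w} : Finset α) ⊆ t := by
    intro s hs
    simp only [Finset.mem_insert, Finset.mem_singleton] at hs
    rcases hs with rfl | rfl | rfl <;> assumption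
  have hcard2 : ({c, c', w} : Finset α).card = 3 := by
    rw [Finset.card_insert_of_notMem (by simp [hcc', Ne.symm hw2.1]),
      Finset.card_insert_of_notMem (by simp [Ne.symm hw2.2]), Finset.card_singleton]
  exact (Finset.eq_of_subset_of_card_le hsub2 (by omega)).symm

lemma tri_side {T : Triangulation m} {t : Finset (Fin m)}
    (ht : IsTriangle m T t) {u v : Fin m} (hu : u ∈ t) (hv : v ∈ t) (huv : u ≠ v) :
    IsSide m T {u, v} := by
  obtain ⟨x, y, z, hxy, hxz, hyz, rfl, s1, s2, s3⟩ := ht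
  simp only [Finset.mem_insert, Finset.mem_singleton] at hu hv
  have c1 : ({y, x} : Finset (Fin m)) = {x, y} := Finset.pair_comm _ _
  have c2 : ({z, x} : Finset (Fin m)) = {x, z} := Finset.pair_comm _ _
  have c3 : ({z, y} : Finset (Fin m)) = {y, z} := Finset.pair_comm _ _
  rcases hu with rfl | rfl | rfl <;> rcases hv with rfl | rfl | rfl <;>
    first
    | exact absurd rfl huv
    | assumption
    | (rw [c1]; assumption)
    | (rw [c2]; assumption)
    | (rw [c3]; assumption)

lemma side_diag_mem {T : Triangulation m} {e : Finset (Fin m)}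
    (hs : IsSide m T e) (hd : IsDiagonal m e) : e ∈ T.diagonals := by
  rcases hs with ⟨u, v, hadj, rfl⟩ | h
  · obtain ⟨x, y, hxy, hnadj, hxy2⟩ := hd
    exfalso
    rcases pair_eq hxy hxy2.symm with ⟨rfl, rfl⟩ | ⟨rfl, rfl⟩
    · exact hnadj hadj
    · exact hnadj (polyAdj_symm hadj)
  · exact h

end Lemmas4

section Lemmas5
variable {m : ℕ}

lemma cycDist_add_rev (hm : 3 ≤ m) {u v : Fin m} (h : u ≠ v) :
    cycDist m u v + cycDist m v u = m := by
  have s1 := cycDist_spec m u v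
  have s2 := cycDist_spec m v u
  simp only [ne_eq, Fin.ext_iff] at h
  have := u.isLt; have := v.isLt
  omega

lemma cycBtw_ne (hm : 3 ≤ m) {u v w : Fin m} (h : CycBtw m u v w) :
    u ≠ v ∧ u ≠ w ∧ v ≠ w := by
  rw [cycBtw_iff] at h
  simp only [ne_eq, Fin.ext_iff]
  omega

lemma side_nc (hm : 3 ≤ m) {T : Triangulation m} {u v z w : Fin m}
    {g : Finset (Fin m)} (hs : IsSide m T {u, v}) (hg : g ∈ T.diagonals)
    (hrep : g = {z, w}) (h1 : CycBtw m u z v) (h2 : CycBtw m v w u) : False := by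
  have huv : u ≠ v := (cycBtw_ne hm h1).2.1
  have hcr : Cross m {u, v} g := ⟨u, v, z, w, rfl, hrep, h1, h2⟩
  rcases hs with ⟨α, β, hadj, hpair⟩ | hmem
  · have : PolyAdj m u v := by
      rcases pair_eq huv hpair with ⟨rfl, rfl⟩ | ⟨rfl, rfl⟩
      · exact hadj
      · exact polyAdj_symm hadj
    exact ((sideOK_of_polyAdj hm this z w).1) ⟨h1, h2⟩
  · exact T.noncross _ hmem _ hg hcr

/-- Every diagonal of a triangulation has a triangle apex on its left side. -/
lemma exists_apex (hm : 3 ≤ m) (T : Triangulation m) {a b : Fin m}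
    (hab : a ≠ b) (hnadj : ¬ PolyAdj m a b) (hmem : {a, b} ∈ T.diagonals) :
    ∃ c, CycBtw m a c b ∧ IsSide m T {a, c} ∧ IsSide m T {c, b} := by
  classical
  have hd := diag_dists hm hab hnadj
  have hdrev := cycDist_add_rev hm hab
  have hbv := b.isLt; have hav := a.isLt
  have sab := cycDist_spec m a b
  set bp : Fin m := if h : b.val = 0 then ⟨m - 1, by omega⟩ else ⟨b.val - 1, by omega⟩
    with hbp
  have hbpv : (b.val = 0 ∧ bp.val = m - 1) ∨ (b.val ≠ 0 ∧ bp.val = b.val - 1) := by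
    by_cases h : b.val = 0
    · left; exact ⟨h, by rw [hbp, dif_pos h]⟩
    · right; exact ⟨h, by rw [hbp, dif_neg h]⟩
  have hbp_adj : PolyAdj m bp b := by
    left
    rcases hbpv with ⟨h0, hv⟩ | ⟨h0, hv⟩
    · rw [hv, show m - 1 + 1 = m by omega, Nat.mod_self]; omega
    · rw [hv, show b.val - 1 + 1 = b.val by omega, Nat.mod_eq_of_lt hbv]
  have hbp_btw : CycBtw m a bp b := by
    rw [cycBtw_iff]
    omega
  set S : Finset (Fin m) :=
    Finset.univ.filter (fun x => CycBtw m a x b ∧ IsSide m T {x, b}) with hSdef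
  have hSne : S.Nonempty :=
    ⟨bp, Finset.mem_filter.mpr ⟨Finset.mem_univ _, hbp_btw, Or.inl ⟨bp, b, hbp_adj, rfl⟩⟩⟩
  obtain ⟨c, hcS, hcmin⟩ := S.exists_min_image (fun x => cycDist m a x) hSne
  obtain ⟨-, hcb, hcside⟩ := Finset.mem_filter.mp hcS
  refine ⟨c, hcb, ?_, hcside⟩
  have hac_ne : a ≠ c := (cycBtw_ne hm hcb).1
  by_cases h1 : cycDist m a c = 1
  · exact Or.inl ⟨a, c, (polyAdj_iff hm a c).mpr (Or.inl h1), rfl⟩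
  · have hdc := cycDist_add_rev hm hac_ne
    have hnadj_ac : ¬ PolyAdj m a c := by
      rw [polyAdj_iff hm]
      rintro (h | h)
      · exact h1 h
      · have := hcb.2
        unfold CycBtw at hcb
        omega
    refine Or.inr (T.maximal _ ⟨a, c, hac_ne, hnadj_ac, rfl⟩ ?_)
    intro g hg hcr
    -- extract an interleaving representation of g
    obtain ⟨α, β, γ, δ, hp1, hp2, hb1, hb2⟩ := hcr
    have key : ∃ z w, g = {z, w} ∧ CycBtw m a z c ∧ CycBtw m c w a := by
      rcases pair_eq hac_ne hp1 with ⟨rfl, rfl⟩ | ⟨rfl, rfl⟩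
      · exact ⟨γ, δ, hp2, hb1, hb2⟩
      · exact ⟨δ, γ, hp2.trans (Finset.pair_comm _ _), hb2, hb1⟩
    obtain ⟨z, w, hgrep, hz, hw⟩ := key
    have hzv := z.isLt; have hwv := w.isLt; have hcv := c.isLt
    have htri : CycBtw m c w b ∨ w = b ∨ CycBtw m b w a := by
      simp only [cycBtw_iff, Fin.ext_iff] at *
      omega
    rcases htri with hcase | hcase | hcase
    · have hz2 : CycBtw m b z c := by
        simp only [cycBtw_iff, Fin.ext_iff] at *
        omega
      exact side_nc hm hcside hg (hgrep.trans (Finset.pair_comm _ _)) hcase hz2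
    · subst hcase
      have hzS : z ∈ S := Finset.mem_filter.mpr ⟨Finset.mem_univ _,
        by simp only [cycBtw_iff, Fin.ext_iff] at *; omega,
        Or.inr (hgrep ▸ hg)⟩
      have := hcmin z hzS
      have hlt : cycDist m a z < cycDist m a c := hz.2
      omega
    · have hz2 : CycBtw m a z b := by
        simp only [cycBtw_iff, Fin.ext_iff] at *
        omega
      exact side_nc hm (Or.inr hmem) hg hgrep hz2 hcase

end Lemmas5

section Lemmas6
variable {m : ℕ}

lemma pair_eq_right {α : Type*} [DecidableEq α] {a c b : α} (hac : a ≠ c)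
    (h : ({a, c} : Finset α) = {a, b}) : c = b := by
  rcases pair_eq hac h with ⟨-, h2⟩ | ⟨h1, h2⟩
  · exact h2
  · exact absurd h2.symm hac

lemma quad_of_mem (hm : 3 ≤ m) (T : Triangulation m) {a b : Fin m}
    (hab : a ≠ b) (hnadj : ¬ PolyAdj m a b) (hmem : {a, b} ∈ T.diagonals) :
    ∃ c c', CycBtw m a c b ∧ CycBtw m b c' a ∧
      IsTriangle m T {a, b, c} ∧ IsTriangle m T {a, b, c'} := by
  obtain ⟨c, hc, hs1, hs2⟩ := exists_apex hm T hab hnadj hmem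
  have hmem' : ({b, a} : Finset (Fin m)) ∈ T.diagonals := Finset.pair_comm a b ▸ hmem
  obtain ⟨c', hc', hs1', hs2'⟩ := exists_apex hm T hab.symm
    (fun h => hnadj (polyAdj_symm h)) hmem'
  obtain ⟨hac, -, hcb⟩ := cycBtw_ne hm hc
  obtain ⟨hbc', -, hc'a⟩ := cycBtw_ne hm hc'
  refine ⟨c, c', hc, hc', ⟨a, b, c, hab, hac, hcb.symm, rfl, Or.inr hmem, hs1,
    by rw [Finset.pair_comm]; exact hs2⟩,
    ⟨a, b, c', hab, hc'a.symm, hbc', rfl, Or.inr hmem,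
    by rw [Finset.pair_comm]; exact hs2', hs1'⟩⟩

lemma apex_unique_aux (hm : 3 ≤ m) (T : Triangulation m) {a b x x' : Fin m}
    (hab : a ≠ b) (hnadj : ¬ PolyAdj m a b)
    (hx : CycBtw m a x b) (hx' : CycBtw m a x' b)
    (hsxb : IsSide m T {x, b}) (hsax' : IsSide m T {a, x'})
    (hlt : cycDist m a x < cycDist m a x') : False := by
  have hd := diag_dists hm hab hnadj
  have hax' : a ≠ x' := (cycBtw_ne hm hx').1
  have hrev := cycDist_add_rev hm hax'
  have hmemax' : ({a, x'} : Finset (Fin m)) ∈ T.diagonals := by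
    apply side_diag_mem hsax'
    refine ⟨a, x', hax', ?_, rfl⟩
    rw [polyAdj_iff hm]
    have u1 : 0 < cycDist m a x ∧ cycDist m a x < cycDist m a b := hx
    have u2 : 0 < cycDist m a x' ∧ cycDist m a x' < cycDist m a b := hx'
    omega
  have hav := a.isLt; have hbv := b.isLt; have hxv := x.isLt; have hx'v := x'.isLt
  have s1 := cycDist_spec m a x; have s2 := cycDist_spec m a x'
  apply side_nc hm hsxb hmemax' (Finset.pair_comm a x')
  · simp only [cycBtw_iff, Fin.ext_iff] at *
    omega
  · simp only [cycBtw_iff, Fin.ext_iff] at *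
    omega

lemma apex_unique (hm : 3 ≤ m) (T : Triangulation m) {a b x x' : Fin m}
    (hab : a ≠ b) (hnadj : ¬ PolyAdj m a b)
    (hx : CycBtw m a x b) (hx' : CycBtw m a x' b)
    (hsax : IsSide m T {a, x}) (hsxb : IsSide m T {x, b})
    (hsax' : IsSide m T {a, x'}) (hsx'b : IsSide m T {x', b}) : x = x' := by
  rcases lt_trichotomy (cycDist m a x) (cycDist m a x') with h | h | h
  · exact absurd (apex_unique_aux hm T hab hnadj hx hx' hsxb hsax' h) id
  · exact (cycDist_inj a x x').mp h
  · exact absurd (apex_unique_aux hm T hab hnadj hx' hx hsx'b hsax h) id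

lemma tri_with_diag (hm : 3 ≤ m) (T : Triangulation m) {a b c c' : Fin m}
    {t : Finset (Fin m)} (hab : a ≠ b) (hnadj : ¬ PolyAdj m a b)
    (hc : CycBtw m a c b) (hc' : CycBtw m b c' a)
    (ht1 : IsTriangle m T {a, b, c}) (ht2 : IsTriangle m T {a, b, c'})
    (ht : IsTriangle m T t) (hsub : ({a, b} : Finset (Fin m)) ⊆ t) :
    t = {a, b, c} ∨ t = {a, b, c'} := by
  obtain ⟨x, y, z, hxy, hxz, hyz, hrep, -, -, -⟩ := id ht
  have hat : a ∈ t := hsub (by simp)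
  have hbt : b ∈ t := hsub (by simp)
  obtain ⟨w, hw, hwa, hwb⟩ := third_elt hrep hxy hxz hyz hat hbt hab
  have hwt : w ∈ t := hw ▸ (by simp)
  have hsaw : IsSide m T {a, w} := tri_side ht hat hwt (Ne.symm hwa)
  have hswb : IsSide m T {w, b} := tri_side ht hwt hbt hwb
  have htri : CycBtw m a w b ∨ CycBtw m b w a := by
    have := a.isLt; have := b.isLt; have := w.isLt
    simp only [ne_eq, Fin.ext_iff] at hwa hwb hab
    simp only [cycBtw_iff]
    omega
  rcases htri with hcase | hcase
  · left
    have hwc : w = c := by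
      refine apex_unique hm T hab hnadj hcase hc hsaw hswb ?_ ?_
      · exact tri_side ht1 (by simp) (by simp) (cycBtw_ne hm hc).1
      · exact tri_side ht1 (by simp) (by simp) (cycBtw_ne hm hc).2.2
    rw [hw, hwc]
  · right
    have hwc : w = c' := by
      refine apex_unique hm T hab.symm (fun h => hnadj (polyAdj_symm h)) hcase hc'
        ?_ ?_ ?_ ?_
      · rw [Finset.pair_comm]; exact hswb
      · rw [Finset.pair_comm]; exact hsaw
      · exact tri_side ht2 (by simp) (by simp) (cycBtw_ne hm hc').1
      · exact tri_side ht2 (by simp) (by simp) (cycBtw_ne hm hc').2.2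
    rw [hw, hwc]

lemma flip_facts {T T' : Triangulation m} {e e' : Finset (Fin m)}
    (h : IsFlip m T T' e e') :
    e ∈ T.diagonals ∧ e' ∉ T.diagonals ∧ e' ∈ T'.diagonals ∧ e ∉ T'.diagonals ∧
      e ≠ e' := by
  obtain ⟨h1, h2, h3⟩ := h
  have hne : e ≠ e' := fun he => h2 (he ▸ h1)
  refine ⟨h1, h2, h3 ▸ Finset.mem_insert_self _ _, ?_, hne⟩
  rw [h3]
  simp [hne, Finset.mem_erase]

lemma flip_cross (hm : 3 ≤ m) {T T' : Triangulation m} {e e' : Finset (Fin m)}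
    (h : IsFlip m T T' e e') : Cross m e' e := by
  obtain ⟨h1, h2, h3, h4, h5⟩ := flip_facts h
  have hex : ∃ g ∈ T.diagonals, Cross m e' g := by
    by_contra hno
    push_neg at hno
    exact h2 (T.maximal e' (T'.isDiagonal e' h3) hno)
  obtain ⟨g, hgT, hcr⟩ := hex
  have : g = e := by
    by_contra hne
    have hgT' : g ∈ T'.diagonals := by
      rw [h.2.2]
      exact Finset.mem_insert_of_mem (Finset.mem_erase.mpr ⟨hne, hgT⟩)
    exact T'.noncross _ h3 _ hgT' hcr
  exact this ▸ hcr

lemma side_transfer {T T' : Triangulation m} {e e' s : Finset (Fin m)}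
    (h : IsFlip m T T' e e') (hs : IsSide m T s) (hne : s ≠ e) :
    IsSide m T' s := by
  rcases hs with hedge | hmem
  · exact Or.inl hedge
  · refine Or.inr ?_
    rw [h.2.2]
    exact Finset.mem_insert_of_mem (Finset.mem_erase.mpr ⟨hne, hmem⟩)

lemma flip_target (hm : 3 ≤ m) {T T' : Triangulation m} {a b c c' : Fin m}
    {e' : Finset (Fin m)} (hflip : IsFlip m T T' {a, b} e')
    (hab : a ≠ b) (hnadj : ¬ PolyAdj m a b)
    (hc : CycBtw m a c b) (hc' : CycBtw m b c' a)
    (ht1 : IsTriangle m T {a, b, c}) (ht2 : IsTriangle m T {a, b, c'}) :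
    e' = {c, c'} := by
  have hcr := flip_cross hm hflip
  obtain ⟨α, β, γ, δ, hp1, hp2, hb1, hb2⟩ := hcr
  have key : ∃ P Q, e' = {P, Q} ∧ CycBtw m P a Q ∧ CycBtw m Q b P := by
    rcases pair_eq hab hp2 with ⟨rfl, rfl⟩ | ⟨rfl, rfl⟩
    · exact ⟨α, β, hp1, hb1, hb2⟩
    · exact ⟨β, α, hp1.trans (Finset.pair_comm _ _), hb2, hb1⟩
  obtain ⟨P, Q, hPQ, hPa, hQb⟩ := key
  -- sides of the two triangles survive into T'
  have hac : a ≠ c := (cycBtw_ne hm hc).1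
  have hcb : c ≠ b := (cycBtw_ne hm hc).2.2
  have hbc' : b ≠ c' := (cycBtw_ne hm hc').1
  have hc'a : c' ≠ a := (cycBtw_ne hm hc').2.2
  have hsac : IsSide m T' {a, c} := by
    apply side_transfer hflip (tri_side ht1 (by simp) (by simp) hac)
    exact fun h => hcb (pair_eq_right hac h)
  have hscb : IsSide m T' {c, b} := by
    apply side_transfer hflip
      (show IsSide m T {c, b} by rw [Finset.pair_comm]
                                 exact tri_side ht1 (by simp) (by simp) hcb.symm)
    intro h
    rcases pair_eq hcb h with ⟨h1, -⟩ | ⟨h1, -⟩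
    · exact hac h1.symm
    · exact hcb h1
  have hsbc' : IsSide m T' {b, c'} := by
    apply side_transfer hflip (tri_side ht2 (by simp) (by simp) hbc')
    intro h
    rcases pair_eq hbc' h with ⟨h1, -⟩ | ⟨-, h2⟩
    · exact hab h1.symm
    · exact hc'a h2
  have hsc'a : IsSide m T' {c', a} := by
    apply side_transfer hflip
      (show IsSide m T {c', a} by rw [Finset.pair_comm]
                                  exact tri_side ht2 (by simp) (by simp) hc'a.symm)
    intro h
    rcases pair_eq hc'a h with ⟨-, h2⟩ | ⟨h1, -⟩
    · exact hab h2
    · exact hbc' h1.symm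
  have he' : e' ∈ T'.diagonals := (flip_facts hflip).2.2.1
  have hav := a.isLt; have hbv := b.isLt; have hcv := c.isLt
  have hc'v := c'.isLt; have hPv := P.isLt; have hQv := Q.isLt
  have hQc : Q = c := by
    have htr : CycBtw m a Q c ∨ Q = c ∨ CycBtw m c Q b := by
      simp only [cycBtw_iff, Fin.ext_iff] at *
      omega
    rcases htr with hcase | hcase | hcase
    · exfalso
      apply side_nc hm hsac he' (hPQ.trans (Finset.pair_comm _ _)) hcase
      simp only [cycBtw_iff, Fin.ext_iff] at *
      omega
    · exact hcase
    · exfalso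
      apply side_nc hm hscb he' (hPQ.trans (Finset.pair_comm _ _)) hcase
      simp only [cycBtw_iff, Fin.ext_iff] at *
      omega
  have hPc' : P = c' := by
    have htr : CycBtw m b P c' ∨ P = c' ∨ CycBtw m c' P a := by
      simp only [cycBtw_iff, Fin.ext_iff] at *
      omega
    rcases htr with hcase | hcase | hcase
    · exfalso
      apply side_nc hm hsbc' he' hPQ hcase
      simp only [cycBtw_iff, Fin.ext_iff] at *
      omega
    · exact hcase
    · exfalso
      apply side_nc hm hsc'a he' hPQ hcase
      simp only [cycBtw_iff, Fin.ext_iff] at *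
      omega
  rw [hPQ, hPc', hQc, Finset.pair_comm]

end Lemmas6

section Lemmas7
variable {m : ℕ}

lemma sideOK_of_side (hm : 3 ≤ m) {T : Triangulation m} {u v p q : Fin m}
    {x : Finset (Fin m)} (hs : IsSide m T {u, v}) (huv : u ≠ v) (hpq : p ≠ q)
    (hx : x ∈ T.diagonals) (hrep : x = {p, q}) : SideOK m u v p q := by
  rcases hs with ⟨α, β, hadj, hpair⟩ | hmemuv
  · have hadj' : PolyAdj m u v := by
      rcases pair_eq huv hpair with ⟨rfl, rfl⟩ | ⟨rfl, rfl⟩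
      · exact hadj
      · exact polyAdj_symm hadj
    exact sideOK_of_polyAdj hm hadj' p q
  · have hncr : ¬ Cross m {u, v} {p, q} :=
      fun hcr => T.noncross _ hmemuv _ hx (by rw [hrep]; exact hcr)
    by_contra hS
    exact hncr ((cross_iff_not_sideOK hm huv hpq).mpr hS)

lemma flip_tri (hm : 3 ≤ m) (T : Triangulation m) {a b c c' : Fin m}
    (hab : a ≠ b) (hnadj : ¬ PolyAdj m a b)
    (hmem : {a, b} ∈ T.diagonals)
    (hc : CycBtw m a c b) (hc' : CycBtw m b c' a)
    (ht1 : IsTriangle m T {a, b, c}) (ht2 : IsTriangle m T {a, b, c'}) :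
    ∃ T' : Triangulation m,
      T'.diagonals = insert {c, c'} (T.diagonals.erase {a, b}) := by
  obtain ⟨hcc', hnadjcc, -, -⟩ := CORE4 hm hc hc'
  have hac : a ≠ c := (cycBtw_ne hm hc).1
  have hcb : c ≠ b := (cycBtw_ne hm hc).2.2
  have hbc' : b ≠ c' := (cycBtw_ne hm hc').1
  have hc'a : c' ≠ a := (cycBtw_ne hm hc').2.2
  have hddiag : IsDiagonal m ({c, c'} : Finset (Fin m)) := ⟨c, c', hcc', hnadjcc, rfl⟩
  have hcrossdd : Cross m {a, b} {c, c'} := ⟨a, b, c, c', rfl, rfl, hc, hc'⟩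
  have hd2notmem : ({c, c'} : Finset (Fin m)) ∉ T.diagonals :=
    fun h => T.noncross _ hmem _ h hcrossdd
  have s_ac : IsSide m T {a, c} := tri_side ht1 (by simp) (by simp) hac
  have s_cb : IsSide m T {c, b} := by
    rw [Finset.pair_comm]; exact tri_side ht1 (by simp) (by simp) hcb.symm
  have s_bc' : IsSide m T {b, c'} := tri_side ht2 (by simp) (by simp) hbc'
  have s_c'a : IsSide m T {c', a} := by
    rw [Finset.pair_comm]; exact tri_side ht2 (by simp) (by simp) hc'a.symm
  have ne_ac : ({a, c} : Finset (Fin m)) ≠ {a, b} :=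
    fun h => hcb (pair_eq_right hac h)
  have ne_cb : ({c, b} : Finset (Fin m)) ≠ {a, b} := by
    intro h
    rcases pair_eq hcb h with ⟨h1, -⟩ | ⟨h1, -⟩
    · exact hac h1.symm
    · exact hcb h1
  have ne_bc' : ({b, c'} : Finset (Fin m)) ≠ {a, b} := by
    intro h
    rcases pair_eq hbc' h with ⟨h1, -⟩ | ⟨-, h2⟩
    · exact hab h1.symm
    · exact hc'a h2
  have ne_c'a : ({c', a} : Finset (Fin m)) ≠ {a, b} := by
    intro h
    rcases pair_eq hc'a h with ⟨-, h2⟩ | ⟨h1, -⟩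
    · exact hab h2
    · exact hbc' h1.symm
  have main : ∀ x ∈ T.diagonals, x ≠ ({a, b} : Finset (Fin m)) →
      ¬ Cross m {c, c'} x ∧ ¬ Cross m x {c, c'} := by
    intro x hx hne
    obtain ⟨p, q, hpq, -, hrep⟩ := T.isDiagonal x hx
    have hneq : ¬(p = a ∧ q = b) ∧ ¬(p = b ∧ q = a) := by
      constructor
      · rintro ⟨rfl, rfl⟩; exact hne hrep
      · rintro ⟨rfl, rfl⟩; exact hne (hrep.trans (Finset.pair_comm _ _))
    have hOK : SideOK m c c' p q :=
      CORE1 hm hc hc' (sideOK_of_side hm s_ac hac hpq hx hrep)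
        (sideOK_of_side hm s_cb hcb hpq hx hrep)
        (sideOK_of_side hm s_bc' hbc' hpq hx hrep)
        (sideOK_of_side hm s_c'a hc'a hpq hx hrep)
        (sideOK_of_side hm (Or.inr hmem) hab hpq hx hrep) hneq
    constructor
    · intro hcr
      rw [hrep] at hcr
      exact (cross_iff_not_sideOK hm hcc' hpq).mp hcr hOK
    · intro hcr
      rw [hrep] at hcr
      exact (cross_iff_not_sideOK hm hpq hcc').mp hcr ((sideOK_symm hm).mp hOK)
  refine ⟨⟨insert {c, c'} (T.diagonals.erase {a, b}), ?_, ?_, ?_⟩, rfl⟩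
  · intro e he
    rcases Finset.mem_insert.mp he with rfl | he
    · exact hddiag
    · exact T.isDiagonal _ (Finset.mem_of_mem_erase he)
  · intro e1 h1 e2 h2
    rcases Finset.mem_insert.mp h1 with rfl | h1 <;>
      rcases Finset.mem_insert.mp h2 with h2' | h2'
    · rw [h2']  -- wrong? handled below
      exact not_cross_self hm hcc'
    · exact (main e2 (Finset.mem_of_mem_erase h2') (Finset.ne_of_mem_erase h2')).1
    · rw [h2']
      exact (main e1 (Finset.mem_of_mem_erase h1) (Finset.ne_of_mem_erase h1)).2
    · exact T.noncross _ (Finset.mem_of_mem_erase h1) _ (Finset.mem_of_mem_erase h2')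
  · intro y hy hnc
    obtain ⟨p, q, hpq, hpqnadj, hrep⟩ := hy
    subst hrep
    have hnc_d2 : ¬ Cross m {p, q} {c, c'} := hnc _ (Finset.mem_insert_self _ _)
    have getOK : ∀ u v : Fin m, u ≠ v → IsSide m T {u, v} →
        ({u, v} : Finset (Fin m)) ≠ {a, b} → SideOK m u v p q := by
      intro u v huv hs hneuv
      rcases hs with ⟨α, β, hadj, hpair⟩ | hmemuv
      · have hadj' : PolyAdj m u v := by
          rcases pair_eq huv hpair with ⟨rfl, rfl⟩ | ⟨rfl, rfl⟩
          · exact hadj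
          · exact polyAdj_symm hadj
        exact sideOK_of_polyAdj hm hadj' p q
      · have hin : ({u, v} : Finset (Fin m)) ∈ insert {c, c'} (T.diagonals.erase {a, b}) :=
          Finset.mem_insert_of_mem (Finset.mem_erase.mpr ⟨hneuv, hmemuv⟩)
        have hncX := hnc _ hin
        have hS : SideOK m p q u v := by
          by_contra hS
          exact hncX ((cross_iff_not_sideOK hm hpq huv).mpr hS)
        exact (sideOK_symm hm).mp hS
    by_cases hcase : SideOK m a b p q
    · have hyT : ({p, q} : Finset (Fin m)) ∈ T.diagonals := by
        apply T.maximal _ ⟨p, q, hpq, hpqnadj, rfl⟩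
        intro g hg
        by_cases hg_ab : g = ({a, b} : Finset (Fin m))
        · subst hg_ab
          intro hcr
          exact (cross_iff_not_sideOK hm hpq hab).mp hcr ((sideOK_symm hm).mp hcase)
        · exact hnc _ (Finset.mem_insert_of_mem (Finset.mem_erase.mpr ⟨hg_ab, hg⟩))
      have hyne : ({p, q} : Finset (Fin m)) ≠ {a, b} := fun h => hnc_d2 (h ▸ hcrossdd)
      exact Finset.mem_insert_of_mem (Finset.mem_erase.mpr ⟨hyne, hyT⟩)
    · have hres := CORE2 hm hc hc' (getOK a c hac s_ac ne_ac) (getOK c b hcb s_cb ne_cb)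
        (getOK b c' hbc' s_bc' ne_bc') (getOK c' a hc'a s_c'a ne_c'a) hcase
      rcases hres with ⟨rfl, rfl⟩ | ⟨rfl, rfl⟩
      · exact Finset.mem_insert_self _ _
      · rw [Finset.pair_comm]
        exact Finset.mem_insert_self _ _

end Lemmas7

section Lemmas8
variable {m : ℕ}

lemma pair_sub_triple {α : Type*} [DecidableEq α] (u v w : α) :
    ({u, v} : Finset α) ⊆ {u, v, w} := by
  intro s hs
  simp only [Finset.mem_insert, Finset.mem_singleton] at hs ⊢
  tauto

lemma insert_erase_comm' {α : Type*} [DecidableEq α] {A : Finset α} {d d2 f1 f2 : α}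
    (h1 : d2 ≠ f1) (h2 : d2 ≠ f2) (h3 : d ≠ f1) (h4 : d ≠ f2) :
    insert d2 ((insert f2 (A.erase f1)).erase d) =
      insert f2 ((insert d2 (A.erase d)).erase f1) := by
  ext s
  simp only [Finset.mem_insert, Finset.mem_erase]
  by_cases e1 : s = d2 <;> by_cases e2 : s = f2 <;> by_cases e3 : s = d <;>
    by_cases e4 : s = f1 <;> simp_all <;> tauto

lemma neighbor_self (hm : 3 ≤ m) (T : Triangulation m) {e : Finset (Fin m)}
    (he : e ∈ T.diagonals) : Neighbor m T e e := by
  obtain ⟨p, q, hpq, hnadj, hrep⟩ := T.isDiagonal e he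
  obtain ⟨c, c', hc, hc', ht1, ht2⟩ := quad_of_mem hm T hpq hnadj (hrep ▸ he)
  exact ⟨he, he, {p, q, c}, ht1, by rw [hrep]; exact pair_sub_triple p q c,
    by rw [hrep]; exact pair_sub_triple p q c⟩

lemma tri_back {T T1 : Triangulation m} {e1 e2 : Finset (Fin m)}
    (hflip : IsFlip m T T1 e1 e2) {d tt : Finset (Fin m)}
    (hd1 : d ∈ T1.diagonals) (htt : IsTriangle m T1 tt) (hsub : d ⊆ tt)
    (hnonb : ¬ Neighbor m T1 e2 d) : IsTriangle m T tt := by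
  obtain ⟨x, y, z, hxy, hxz, hyz, hrep, s1, s2, s3⟩ := id htt
  have down : ∀ s : Finset (Fin m), IsSide m T1 s → s ⊆ tt → IsSide m T s := by
    intro s hs hstt
    rcases hs with he | hmem2
    · exact Or.inl he
    · have hsne : s ≠ e2 := by
        rintro rfl
        exact hnonb ⟨hmem2, hd1, tt, htt, hstt, hsub⟩
      right
      have hmem3 : s ∈ insert e2 (T.diagonals.erase e1) := hflip.2.2 ▸ hmem2
      rcases Finset.mem_insert.mp hmem3 with h | h
      · exact absurd h hsne
      · exact Finset.mem_of_mem_erase h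
  refine ⟨x, y, z, hxy, hxz, hyz, hrep, down _ s1 ?_, down _ s2 ?_, down _ s3 ?_⟩
  · rw [hrep]; exact pair_sub_triple x y z
  · rw [hrep]
    intro s hs
    simp only [Finset.mem_insert, Finset.mem_singleton] at hs ⊢
    tauto
  · rw [hrep]
    intro s hs
    simp only [Finset.mem_insert, Finset.mem_singleton] at hs ⊢
    tauto

lemma neighbor_down (hm : 3 ≤ m) {T1 Tj : Triangulation m} {a b c c' : Fin m}
    {e2 : Finset (Fin m)} (hab : a ≠ b) (hnadj : ¬ PolyAdj m a b)
    (hc : CycBtw m a c b) (hc' : CycBtw m b c' a)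
    (hmem1 : {a, b} ∈ T1.diagonals)
    (ht11 : IsTriangle m T1 {a, b, c}) (ht12 : IsTriangle m T1 {a, b, c'})
    (hmemj : {a, b} ∈ Tj.diagonals)
    (htj1 : IsTriangle m Tj {a, b, c}) (htj2 : IsTriangle m Tj {a, b, c'})
    (hnonbj : ¬ Neighbor m Tj e2 {a, b}) : ¬ Neighbor m T1 e2 {a, b} := by
  rintro ⟨he2, hd1, t, ht, he2t, hdt⟩
  have hdiag := T1.isDiagonal _ he2
  obtain ⟨p, q, hpq, hpqnadj, hrep⟩ := id hdiag
  have hpt : p ∈ t := he2t (by rw [hrep]; simp)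
  have hqt : q ∈ t := he2t (by rw [hrep]; simp)
  rcases tri_with_diag hm T1 hab hnadj hc hc' ht11 ht12 ht hdt with rfl | rfl
  · refine hnonbj ⟨?_, hmemj, {a, b, c}, htj1, he2t, hdt⟩
    apply side_diag_mem _ hdiag
    rw [hrep]
    exact tri_side htj1 hpt hqt hpq
  · refine hnonbj ⟨?_, hmemj, {a, b, c'}, htj2, he2t, hdt⟩
    apply side_diag_mem _ hdiag
    rw [hrep]
    exact tri_side htj2 hpt hqt hpq

end Lemmas8

section Lemmas9
variable {m : ℕ}

lemma hard_case (hm : 3 ≤ m) {TJ UU Tj₀ : Triangulation m} {a b c c' : Fin m}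
    {X Y : Finset (Fin m)}
    (hab : a ≠ b) (hnadj : ¬ PolyAdj m a b)
    (hc : CycBtw m a c b) (hc' : CycBtw m b c' a)
    (ht1 : IsTriangle m Tj₀ {a, b, c}) (ht2 : IsTriangle m Tj₀ {a, b, c'})
    (hmemj : ({a, b} : Finset (Fin m)) ∈ TJ.diagonals)
    (hform : UU.diagonals = insert {c, c'} (TJ.diagonals.erase {a, b}))
    (hXmem : X ∈ TJ.diagonals) (hYmem : Y ∈ TJ.diagonals)
    (hnb : Neighbor m UU X Y) :
    Neighbor m TJ X Y ∨
      (X ∈ Tj₀.diagonals ∧ (X ⊆ ({a, b, c} : Finset (Fin m)) ∨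
        X ⊆ ({a, b, c'} : Finset (Fin m)))) := by
  obtain ⟨hcc', -, -, -⟩ := CORE4 hm hc hc'
  have hac : a ≠ c := (cycBtw_ne hm hc).1
  have hcb : c ≠ b := (cycBtw_ne hm hc).2.2
  have hbc' : b ≠ c' := (cycBtw_ne hm hc').1
  have hc'a : c' ≠ a := (cycBtw_ne hm hc').2.2
  have hcrossdd : Cross m {a, b} {c, c'} := ⟨a, b, c, c', rfl, rfl, hc, hc'⟩
  have hccnot : ({c, c'} : Finset (Fin m)) ∉ TJ.diagonals :=
    fun h => TJ.noncross _ hmemj _ h hcrossdd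
  have hXne : X ≠ ({c, c'} : Finset (Fin m)) := fun h => hccnot (h ▸ hXmem)
  have hYne : Y ≠ ({c, c'} : Finset (Fin m)) := fun h => hccnot (h ▸ hYmem)
  obtain ⟨hXU, hYU, t, ht, hXt, hYt⟩ := hnb
  by_cases hsubt : ({c, c'} : Finset (Fin m)) ⊆ t
  · -- t contains the new diagonal
    obtain ⟨x, y, z, hxy, hxz, hyz, hrep, -, -, -⟩ := id ht
    have hct : c ∈ t := hsubt (by simp)
    have hc't : c' ∈ t := hsubt (by simp)
    obtain ⟨w, hwrep, hwc, hwc'⟩ := third_elt hrep hxy hxz hyz hct hc't hcc'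
    by_cases hXY : X = Y
    · left
      rw [hXY]
      exact neighbor_self hm TJ hYmem
    · obtain ⟨px, qx, hpxqx, -, hXrep⟩ := TJ.isDiagonal _ hXmem
      obtain ⟨py, qy, hpyqy, -, hYrep⟩ := TJ.isDiagonal _ hYmem
      have hXt' : ({px, qx} : Finset (Fin m)) ⊆ {c, c', w} := by
        rw [← hXrep, ← hwrep]; exact hXt
      have hYt' : ({py, qy} : Finset (Fin m)) ⊆ {c, c', w} := by
        rw [← hYrep, ← hwrep]; exact hYt
      have hXw : X = ({c, w} : Finset (Fin m)) ∨ X = {c', w} := by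
        rcases pair_subset_triple hpxqx hXt' with h | h | h
        · exact absurd (hXrep.trans h) hXne
        · exact Or.inl (hXrep.trans h)
        · exact Or.inr (hXrep.trans h)
      have hYw : Y = ({c, w} : Finset (Fin m)) ∨ Y = {c', w} := by
        rcases pair_subset_triple hpyqy hYt' with h | h | h
        · exact absurd (hYrep.trans h) hYne
        · exact Or.inl (hYrep.trans h)
        · exact Or.inr (hYrep.trans h)
      have hboth : ({c, w} : Finset (Fin m)) ∈ TJ.diagonals ∧
          ({c', w} : Finset (Fin m)) ∈ TJ.diagonals := by
        rcases hXw with h1 | h1 <;> rcases hYw with h2 | h2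
        · exact absurd (h1.trans h2.symm) hXY
        · exact ⟨h1 ▸ hXmem, h2 ▸ hYmem⟩
        · exact ⟨h2 ▸ hYmem, h1 ▸ hXmem⟩
        · exact absurd (h1.trans h2.symm) hXY
      have hw_ab : w = a ∨ w = b := by
        have hcw_ne : c ≠ w := fun h => hwc h.symm
        have hc'w_ne : c' ≠ w := fun h => hwc' h.symm
        exact CORE3 hm hc hc'
          (sideOK_of_side hm (Or.inr hmemj) hab hcw_ne hboth.1 rfl)
          (sideOK_of_side hm (Or.inr hmemj) hab hc'w_ne hboth.2 rfl)
          hwc hwc'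
      right
      have hXdiag := TJ.isDiagonal _ hXmem
      rcases hXw with h1 | h1 <;> rcases hw_ab with rfl | rfl
      · refine ⟨side_diag_mem ?_ hXdiag, Or.inl ?_⟩
        · rw [h1]
          exact tri_side ht1 (by simp) (by simp) (fun h => hac h.symm)
        · rw [h1]; intro s hs; simp at hs ⊢; tauto
      · refine ⟨side_diag_mem ?_ hXdiag, Or.inl ?_⟩
        · rw [h1]
          exact tri_side ht1 (by simp) (by simp) hcb
        · rw [h1]; intro s hs; simp at hs ⊢; tauto
      · refine ⟨side_diag_mem ?_ hXdiag, Or.inr ?_⟩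
        · rw [h1]
          exact tri_side ht2 (by simp) (by simp) hc'a
        · rw [h1]; intro s hs; simp at hs ⊢; tauto
      · refine ⟨side_diag_mem ?_ hXdiag, Or.inr ?_⟩
        · rw [h1]
          exact tri_side ht2 (by simp) (by simp) (fun h => hbc' h.symm)
        · rw [h1]; intro s hs; simp at hs ⊢; tauto
  · -- t avoids the new diagonal: transfer down
    left
    refine ⟨hXmem, hYmem, t, ?_, hXt, hYt⟩
    obtain ⟨x, y, z, hxy, hxz, hyz, hrep, s1, s2, s3⟩ := id ht
    have down : ∀ s : Finset (Fin m), IsSide m UU s → s ⊆ t → IsSide m TJ s := by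
      intro s hs hst
      rcases hs with he | hmem2
      · exact Or.inl he
      · have hmem3 := hform ▸ hmem2
        rcases Finset.mem_insert.mp hmem3 with h | h
        · exact absurd (h ▸ hst) hsubt
        · exact Or.inr (Finset.mem_of_mem_erase h)
    exact ⟨x, y, z, hxy, hxz, hyz, hrep,
      down _ s1 (by rw [hrep]; exact pair_sub_triple x y z),
      down _ s2 (by rw [hrep]; intro s hs; simp at hs ⊢; tauto),
      down _ s3 (by rw [hrep]; intro s hs; simp at hs ⊢; tauto)⟩

end Lemmas9

set_option maxHeartbeats 1600000 in
/-- Let `F` be a flip sequence of length `r` transforming `Ts 0` into `Ts r`,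
and let `π(F)` be a permutation of the flips of `F` that is a topological sort
of the DAG `D_F`: the permuted sequence `G` places at position `p` the flip
`F (σ p)`, and whenever `D_F` has an arc from flip `σ p` to flip `σ q`, the
position `p` comes before the position `q`. Then `π(F)` is a valid sequence of
flips transforming `Ts 0` into `Ts r`. -/

theorem topological_sort_valid (m : ℕ) (hm : 3 ≤ m)
    (r : ℕ) (F : ℕ → Finset (Fin m) × Finset (Fin m)) (Ts : ℕ → Triangulation m)
    (hseq : IsFlipSeq m r F Ts)
    (σ : Equiv.Perm (Fin r))
    (htopo : ∀ p q : Fin r, Arc m r F Ts (σ p).val (σ q).val → p < q)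
    (G : ℕ → Finset (Fin m) × Finset (Fin m))
    (hG : ∀ p : Fin r, G p.val = F (σ p).val) :
    ∃ Ts' : ℕ → Triangulation m,
      IsFlipSeq m r G Ts' ∧ Ts' 0 = Ts 0 ∧ Ts' r = Ts r := by
  induction r generalizing F Ts G with
  | zero => exact ⟨Ts, fun i hi => absurd hi (Nat.not_lt_zero i), rfl, rfl⟩
  | succ r ih =>
    have hj₀lt : ((σ 0).val) < r + 1 := (σ 0).isLt
    have hflip₀ := hseq (σ 0).val hj₀lt
    have hdmem : (F (σ 0).val).1 ∈ (Ts (σ 0).val).diagonals := hflip₀.1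
    obtain ⟨a, b, hab, hnadj, hdrep⟩ := (Ts (σ 0).val).isDiagonal _ hdmem
    obtain ⟨c, c', hc, hc', ht1, ht2⟩ :=
      quad_of_mem hm (Ts (σ 0).val) hab hnadj (hdrep ▸ hdmem)
    obtain ⟨hcc', hnadjcc, -, -⟩ := CORE4 hm hc hc'
    have hac : a ≠ c := (cycBtw_ne hm hc).1
    have hcb : c ≠ b := (cycBtw_ne hm hc).2.2
    have hbc' : b ≠ c' := (cycBtw_ne hm hc').1
    have hc'a : c' ≠ a := (cycBtw_ne hm hc').2.2
    have hflip₀' : IsFlip m (Ts (σ 0).val) (Ts ((σ 0).val + 1)) {a, b} (F (σ 0).val).2 := by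
      rw [← hdrep]; exact hflip₀
    have hd2 : (F (σ 0).val).2 = {c, c'} := flip_target hm hflip₀' hab hnadj hc hc' ht1 ht2
    have hcross_d2d : Cross m (F (σ 0).val).2 (F (σ 0).val).1 := flip_cross hm hflip₀
    -- no arcs into flip j₀
    have hfree : ∀ i, i < (σ 0).val → ¬ Neighbor m (Ts (σ 0).val) (F i).2 (F (σ 0).val).1 := by
      intro i hi hnb
      have hival : i < r + 1 := lt_trans hi hj₀lt
      have harc : Arc m (r+1) F Ts ((σ (σ.symm ⟨i, hival⟩)).val) ((σ 0).val) := by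
        rw [Equiv.apply_symm_apply]
        exact ⟨hi, hj₀lt, hnb⟩
      exact absurd (htopo _ 0 harc) (Fin.not_lt_zero _)
    -- persistence of the quadrilateral backwards
    have hP : ∀ i k, k + i = (σ 0).val →
        ({a, b} : Finset (Fin m)) ∈ (Ts k).diagonals ∧
          IsTriangle m (Ts k) {a, b, c} ∧ IsTriangle m (Ts k) {a, b, c'} := by
      intro i
      induction i with
      | zero =>
        intro k hk
        have hkj : k = (σ 0).val := by omega
        subst hkj
        exact ⟨hdrep ▸ hdmem, ht1, ht2⟩
      | succ i ihp =>
        intro k hk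
        obtain ⟨hmem1, htk1, htk2⟩ := ihp (k+1) (by omega)
        have hklt : k < r + 1 := by omega
        have hfk := hseq k hklt
        have hnonb1 : ¬ Neighbor m (Ts (k+1)) (F k).2 {a, b} := by
          apply neighbor_down hm hab hnadj hc hc' hmem1 htk1 htk2 (hdrep ▸ hdmem) ht1 ht2
          rw [← hdrep]
          exact hfree k (by omega)
        refine ⟨?_, tri_back hfk hmem1 htk1 (pair_sub_triple a b c) hnonb1,
          tri_back hfk hmem1 htk2 (pair_sub_triple a b c') hnonb1⟩
        have hne : ({a, b} : Finset (Fin m)) ≠ (F k).2 := by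
          intro heq
          exact hnonb1 (by rw [← heq]; exact neighbor_self hm (Ts (k+1)) hmem1)
        have hmem1' : ({a, b} : Finset (Fin m)) ∈
            insert (F k).2 ((Ts k).diagonals.erase (F k).1) := hfk.2.2 ▸ hmem1
        rcases Finset.mem_insert.mp hmem1' with h | h
        · exact absurd h hne
        · exact Finset.mem_of_mem_erase h
    have hdk : ∀ k, k ≤ (σ 0).val → (F (σ 0).val).1 ∈ (Ts k).diagonals := by
      intro k hk
      rw [hdrep]
      exact (hP ((σ 0).val - k) k (by omega)).1
    have hd2notk : ∀ k, k ≤ (σ 0).val → (F (σ 0).val).2 ∉ (Ts k).diagonals := by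
      intro k hk hmem2
      exact (Ts k).noncross _ hmem2 _ (hdk k hk) hcross_d2d
    -- flipped triangulations below j₀
    have hW : ∀ k, k < (σ 0).val → ∃ T' : Triangulation m,
        T'.diagonals = insert (F (σ 0).val).2 ((Ts k).diagonals.erase (F (σ 0).val).1) := by
      intro k hk
      obtain ⟨hm1, htk1, htk2⟩ := hP ((σ 0).val - k) k (by omega)
      obtain ⟨T', hT'⟩ := flip_tri hm (Ts k) hab hnadj hm1 hc hc' htk1 htk2
      refine ⟨T', ?_⟩
      rw [hT', hd2, hdrep]
    choose W hWspec using hW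
    set U : ℕ → Triangulation m := fun k =>
      if h : 1 ≤ k ∧ k ≤ (σ 0).val then W (k-1) (by omega) else Ts k with hUdef
    have hUtop : ∀ k, (σ 0).val + 1 ≤ k → U k = Ts k := by
      intro k hk
      simp only [hUdef]
      rw [dif_neg (by omega)]
    have hU0 : U 0 = Ts 0 := by
      simp only [hUdef]
      rw [dif_neg (by omega)]
    have hUform : ∀ k, 1 ≤ k → k ≤ (σ 0).val + 1 →
        (U k).diagonals =
          insert (F (σ 0).val).2 ((Ts (k-1)).diagonals.erase (F (σ 0).val).1) := by
      intro k h1 h2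
      by_cases h : k ≤ (σ 0).val
      · simp only [hUdef]
        rw [dif_pos ⟨h1, h⟩]
        exact hWspec (k-1) (by omega)
      · have hkval : k = (σ 0).val + 1 := by omega
        subst hkval
        rw [hUtop ((σ 0).val + 1) le_rfl]
        simpa using hflip₀.2.2
    -- ne facts for flips before j₀
    have hFne : ∀ k, k < (σ 0).val → (F k).1 ≠ (F (σ 0).val).1 ∧
        (F k).2 ≠ (F (σ 0).val).2 ∧ (F k).2 ≠ (F (σ 0).val).1 ∧
        (F k).1 ≠ (F (σ 0).val).2 := by
      intro k hk
      have hffk := flip_facts (hseq k (by omega))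
      refine ⟨?_, ?_, ?_, ?_⟩
      · intro h
        exact hffk.2.2.2.1 (by rw [h]; exact hdk (k+1) (by omega))
      · intro h
        exact hd2notk (k+1) (by omega) (by rw [← h]; exact hffk.2.2.1)
      · intro h
        exact hffk.2.1 (by rw [h]; exact hdk k (by omega))
      · intro h
        exact hd2notk k (by omega) (by rw [← h]; exact hffk.1)
    -- the permuted first segment
    set G₁ : ℕ → Finset (Fin m) × Finset (Fin m) := fun k =>
      if k = 0 then F (σ 0).val else if k ≤ (σ 0).val then F (k-1) else F k with hG₁def
    have hG₁0 : G₁ 0 = F (σ 0).val := by simp [hG₁def]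
    have hG₁mid : ∀ k, 1 ≤ k → k ≤ (σ 0).val → G₁ k = F (k-1) := by
      intro k h1 h2
      simp only [hG₁def]
      rw [if_neg (by omega), if_pos h2]
    have hG₁top : ∀ k, (σ 0).val < k → G₁ k = F k := by
      intro k h1
      simp only [hG₁def]
      rw [if_neg (by omega), if_neg (by omega)]
    have hG₁seq : IsFlipSeq m (r+1) G₁ U := by
      intro i hi
      rcases Nat.eq_zero_or_pos i with rfl | hipos
      · rw [hG₁0, hU0]
        refine ⟨hdk 0 (by omega), hd2notk 0 (by omega), ?_⟩
        have h1 := hUform 1 le_rfl (by omega)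
        simpa using h1
      · by_cases hij : i ≤ (σ 0).val
        · rw [hG₁mid i hipos hij]
          have hfm := hseq (i-1) (by omega)
          have hUi := hUform i hipos (by omega)
          have hUi1 := hUform (i+1) (by omega) (by omega)
          rw [show i + 1 - 1 = i by omega] at hUi1
          have hnef := hFne (i-1) (by omega)
          refine ⟨?_, ?_, ?_⟩
          · rw [hUi]
            exact Finset.mem_insert_of_mem (Finset.mem_erase.mpr ⟨hnef.1, hfm.1⟩)
          · rw [hUi]
            intro hmem'
            rcases Finset.mem_insert.mp hmem' with h | h
            · exact hnef.2.1 h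
            · exact hfm.2.1 (Finset.mem_of_mem_erase h)
          · rw [hUi1, hUi]
            have hTsi : (Ts i).diagonals =
                insert (F (i-1)).2 ((Ts (i-1)).diagonals.erase (F (i-1)).1) := by
              have h22 := hfm.2.2
              rw [show i - 1 + 1 = i by omega] at h22
              exact h22
            rw [hTsi]
            exact insert_erase_comm' (Ne.symm hnef.2.2.2) (Ne.symm hnef.2.1)
              (Ne.symm hnef.1) (Ne.symm hnef.2.2.1)
        · rw [hG₁top i (by omega), hUtop i (by omega), hUtop (i+1) (by omega)]
          exact hseq i hi
    -- index lifting
    have hliftex : ∀ p : Fin r, ∃ P : Fin (r+1), P.val = p.val + 1 :=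
      fun p => ⟨⟨p.val + 1, by omega⟩, rfl⟩
    choose lift hlift using hliftex
    have hσne : ∀ p : Fin r, (σ (lift p)).val ≠ (σ 0).val := by
      intro p h
      have h2 : lift p = 0 := σ.injective (Fin.ext h)
      have := hlift p
      rw [h2] at this
      simp at this
    have hembex : ∀ p : Fin r, ∃ v : Fin r,
        ((σ (lift p)).val < (σ 0).val ∧ v.val = (σ (lift p)).val) ∨
        ((σ 0).val < (σ (lift p)).val ∧ v.val + 1 = (σ (lift p)).val) := by
      intro p
      rcases Nat.lt_trichotomy (σ (lift p)).val (σ 0).val with h | h | h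
      · exact ⟨⟨(σ (lift p)).val, by omega⟩, Or.inl ⟨h, rfl⟩⟩
      · exact absurd h (hσne p)
      · have hlt := (σ (lift p)).isLt
        refine ⟨⟨(σ (lift p)).val - 1, by omega⟩, Or.inr ⟨h, ?_⟩⟩
        show (σ (lift p)).val - 1 + 1 = (σ (lift p)).val
        omega
    choose emb hembspec using hembex
    have hinj : Function.Injective emb := by
      intro p q h
      have hp := hembspec p; have hq := hembspec q
      have hvals : (emb p).val = (emb q).val := by rw [h]
      have hvv : (σ (lift p)).val = (σ (lift q)).val := by omega
      have hliftpq : lift p = lift q := σ.injective (Fin.ext hvv)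
      have h1 := hlift p; have h2 := hlift q
      rw [hliftpq] at h1
      exact Fin.ext (by omega)
    set σ' : Equiv.Perm (Fin r) :=
      Equiv.ofBijective emb (Finite.injective_iff_bijective.mp hinj) with hσ'def
    have hσ'app : ∀ p : Fin r, σ' p = emb p := fun p => rfl
    set Ft : ℕ → Finset (Fin m) × Finset (Fin m) := fun i => G₁ (i+1) with hFtdef
    set Tt : ℕ → Triangulation m := fun i => U (i+1) with hTtdef
    have hkey : ∀ p : Fin r, Ft (σ' p).val = F (σ (lift p)).val := by
      intro p
      rw [hσ'app]
      rcases hembspec p with ⟨h1, h2⟩ | ⟨h1, h2⟩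
      · simp only [hFtdef]
        rw [hG₁mid ((emb p).val + 1) (by omega) (by omega),
          show (emb p).val + 1 - 1 = (emb p).val by omega, h2]
      · simp only [hFtdef]
        rw [h2, hG₁top ((σ (lift p)).val) (by omega)]
    have hseqt : IsFlipSeq m r Ft Tt := fun i hi => hG₁seq (i+1) (by omega)
    have hGt : ∀ p : Fin r, (fun k => G (k+1)) p.val = Ft (σ' p).val := by
      intro p
      rw [hkey p]
      have := hG (lift p)
      rw [hlift p] at this
      exact this
    -- topological order for the reduced sequence
    have htopot : ∀ p q : Fin r, Arc m r Ft Tt (σ' p).val (σ' q).val → p < q := by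
      intro p q harc
      obtain ⟨hij, hjr, hnb⟩ := harc
      by_contra hpq
      have hpvqv : ¬ p.val < q.val := fun h => hpq (Fin.lt_def.mpr h)
      have hpqne : p.val ≠ q.val := by
        intro h
        rw [hσ'app, hσ'app, show p = q from Fin.ext h] at hij
        exact absurd hij (lt_irrefl _)
      have hsp := hembspec p; have hsq := hembspec q
      rw [hσ'app, hσ'app] at hij
      have hi'j' : (σ (lift p)).val < (σ (lift q)).val := by omega
      have hnoarc : ¬ Neighbor m (Ts (σ (lift q)).val)
          (F (σ (lift p)).val).2 (F (σ (lift q)).val).1 := by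
        intro hn
        have harc2 : Arc m (r+1) F Ts (σ (lift p)).val (σ (lift q)).val :=
          ⟨hi'j', (σ (lift q)).isLt, hn⟩
        have hlt := htopo (lift p) (lift q) harc2
        have hlt2 : (lift p).val < (lift q).val := hlt
        rw [hlift p, hlift q] at hlt2
        exact hpvqv (by omega)
      rw [hkey p, hkey q] at hnb
      -- hnb : Neighbor m (Tt (σ' q).val) (F (σ (lift p)).val).2 (F (σ (lift q)).val).1
      rcases hsq with ⟨hq1, hq2⟩ | ⟨hq1, hq2⟩
      · -- (σ (lift q)).val < j₀ : the hard case
        have hjeq : (σ' q).val = (σ (lift q)).val := by rw [hσ'app]; exact hq2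
        rw [hjeq] at hnb
        have hUj0 := hUform ((σ (lift q)).val + 1) (by omega) (by omega)
        rw [show (σ (lift q)).val + 1 - 1 = (σ (lift q)).val by omega] at hUj0
        have hUj := hUj0
        rw [hd2, hdrep] at hUj
        have hnb' : Neighbor m (U ((σ (lift q)).val + 1))
            (F (σ (lift p)).val).2 (F (σ (lift q)).val).1 := hnb
        have hi'j₀ : (σ (lift p)).val < (σ 0).val := by omega
        have hXne2 : (F (σ (lift p)).val).2 ≠ (F (σ 0).val).2 :=
          (hFne _ hi'j₀).2.1
        have hXmem : (F (σ (lift p)).val).2 ∈ (Ts (σ (lift q)).val).diagonals := by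
          have hX' := hUj0 ▸ hnb'.1
          rcases Finset.mem_insert.mp hX' with h | h
          · exact absurd h hXne2
          · exact Finset.mem_of_mem_erase h
        have hYmem : (F (σ (lift q)).val).1 ∈ (Ts (σ (lift q)).val).diagonals :=
          (hseq _ (by omega)).1
        obtain ⟨hmemj, -, -⟩ :=
          hP ((σ 0).val - (σ (lift q)).val) ((σ (lift q)).val) (by omega)
        rcases hard_case hm hab hnadj hc hc' ht1 ht2 hmemj hUj hXmem hYmem hnb'
          with hnbj | ⟨hXj, hXsub⟩
        · exact hnoarc hnbj
        · have harcj₀ : Arc m (r+1) F Ts (σ (lift p)).val (σ 0).val := by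
            refine ⟨hi'j₀, hj₀lt, ?_⟩
            rcases hXsub with hsub' | hsub'
            · exact ⟨hXj, hdmem, {a, b, c}, ht1, hsub',
                by rw [hdrep]; exact pair_sub_triple a b c⟩
            · exact ⟨hXj, hdmem, {a, b, c'}, ht2, hsub',
                by rw [hdrep]; exact pair_sub_triple a b c'⟩
          exact absurd (htopo (lift p) 0 harcj₀) (Fin.not_lt_zero _)
      · -- (σ (lift q)).val > j₀ : easy case
        have hjeq : (σ' q).val + 1 = (σ (lift q)).val := by rw [hσ'app]; exact hq2
        have hTteq : U ((σ' q).val + 1) = Ts (σ (lift q)).val := by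
          rw [hjeq]
          exact hUtop _ (by omega)
        have hnb' : Neighbor m (U ((σ' q).val + 1))
            (F (σ (lift p)).val).2 (F (σ (lift q)).val).1 := hnb
        rw [hTteq] at hnb'
        exact hnoarc hnb'
    obtain ⟨Ts'', hseq'', h0'', hr''⟩ := ih Ft Tt hseqt σ' htopot (fun k => G (k+1)) hGt
    refine ⟨fun k => if k = 0 then Ts 0 else Ts'' (k-1), ?_, by simp, ?_⟩
    · intro i hi
      rcases Nat.eq_zero_or_pos i with rfl | hipos
      · simp only [if_pos rfl, if_neg one_ne_zero]
        show IsFlip m (Ts 0) (Ts'' 0) (G 0).1 (G 0).2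
        have hG0 : G 0 = F (σ 0).val := hG 0
        rw [hG0, h0'']
        have hstep := hG₁seq 0 (by omega)
        rw [hG₁0, hU0] at hstep
        exact hstep
      · simp only [if_neg (by omega : ¬ i = 0), if_neg (by omega : ¬ i + 1 = 0)]
        rw [show i + 1 - 1 = i by omega]
        have hstep : IsFlip m (Ts'' (i-1)) (Ts'' (i-1+1)) (G (i-1+1)).1 (G (i-1+1)).2 :=
          hseq'' (i-1) (by omega)
        rw [show i - 1 + 1 = i by omega] at hstep
        exact hstep
    · simp only [if_neg (by omega : ¬ r + 1 = 0)]
      rw [show r + 1 - 1 = r by omega, hr'']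
      show U (r + 1) = Ts (r + 1)
      exact hUtop (r+1) (by omega)
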